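/- arXiv:1205.3525 — 2 statements merged into one kernel-verified Lean document; each statement's English description precedes it below -/
import Mathlib

section
/- Let χ mod q be a Dirichlet character with χ(-1) = -1 and χ(n) = 1 for all positive n ≤ x, let ψ mod m be a Dirichlet character with ψ(-1) = -1 and m prime, and suppose ψ is primitive. Then there exists θ ∈ [0,1] with |∑_{1 ≤ |n| ≤ x} (χ(n)ψ(n)/n) e(nθ)| ≥ (√m/φ(m)) ∑_{n ≤ x} 1/n. -/
open Complex

/-- `e(x) = e^{2πix}` -/
noncomputable def e (x : ℝ) : ℂ := Complex.exp (2 * Real.pi * Complex.I * x)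

section aux

variable {m : ℕ} [NeZero m]

lemma conj_stdAddChar (a : ZMod m) :
    (starRingEnd ℂ) (ZMod.stdAddChar a) = ZMod.stdAddChar (-a) := by
  have h1 : a = ((a.val : ℤ) : ZMod m) := by simp [ZMod.natCast_val, ZMod.cast_id]
  have h2 : ((-(a.val : ℤ) : ℤ) : ZMod m) = -a := by
    push_cast
    simp [ZMod.natCast_val, ZMod.cast_id]
  rw [← h2]
  conv_lhs => rw [h1]
  rw [ZMod.stdAddChar_coe, ZMod.stdAddChar_coe, ← Complex.exp_conj]
  congr 1
  simp only [map_div₀, map_mul, Complex.conj_I, map_ofNat, conj_ofReal,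
    map_intCast, map_natCast]
  push_cast
  ring

lemma conj_gaussSum (ψ : DirichletCharacter ℂ m) :
    (starRingEnd ℂ) (gaussSum ψ ZMod.stdAddChar) = gaussSum ψ⁻¹ (ZMod.stdAddChar)⁻¹ := by
  rw [gaussSum, gaussSum, map_sum]
  refine Finset.sum_congr rfl fun a _ => ?_
  rw [map_mul, conj_stdAddChar, AddChar.inv_apply]
  congr 1
  exact ψ.star_apply' a

lemma norm_gaussSum (hm : m.Prime) (ψ : DirichletCharacter ℂ m) (hψ : ψ ≠ 1) :
    ‖gaussSum ψ ZMod.stdAddChar‖ = Real.sqrt m := by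
  haveI : Fact m.Prime := ⟨hm⟩
  have h := gaussSum_mul_gaussSum_eq_card hψ (ZMod.isPrimitive_stdAddChar m)
  rw [← conj_gaussSum, Complex.mul_conj, ZMod.card] at h
  have h2 : Complex.normSq (gaussSum ψ ZMod.stdAddChar) = (m : ℝ) := by
    exact_mod_cast h
  rw [Complex.norm_def, h2]

lemma innerSum17 (ψ : DirichletCharacter ℂ m) (hψ : ψ.IsPrimitive) (n : ℤ) :
    ∑ a : ZMod m, ψ a * e ((n : ℝ) * ((a.val : ℝ) / m))
      = ψ⁻¹ ((n : ZMod m)) * gaussSum ψ ZMod.stdAddChar := by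
  rw [← gaussSum_mulShift_of_isPrimitive ZMod.stdAddChar hψ (n : ZMod m)]
  rw [gaussSum]
  refine Finset.sum_congr rfl fun a _ => ?_
  congr 1
  rw [AddChar.mulShift_apply]
  have h1 : (n : ZMod m) * a = ((n * (a.val : ℤ) : ℤ) : ZMod m) := by
    push_cast
    simp [ZMod.natCast_val, ZMod.cast_id]
  rw [h1, ZMod.stdAddChar_coe]
  unfold e
  congr 1
  have hm0 : (m : ℂ) ≠ 0 := Nat.cast_ne_zero.mpr (NeZero.ne m)
  push_cast
  field_simp
  try ring

lemma sum_even {g : ℤ → ℂ} (hg : ∀ n : ℤ, g (-n) = g n) (N : ℕ) :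
    ∑ n ∈ (Finset.Icc (-(N : ℤ)) N).filter (fun n => n ≠ 0), g n
      = 2 * ∑ n ∈ Finset.Icc 1 N, g n := by
  have h1 : (Finset.Icc (-(N : ℤ)) N).filter (fun n => n ≠ 0)
      = Finset.Icc (-(N : ℤ)) (-1) ∪ Finset.Icc 1 N := by
    ext n
    simp only [Finset.mem_filter, Finset.mem_Icc, Finset.mem_union]
    omega
  have hd : Disjoint (Finset.Icc (-(N : ℤ)) (-1)) (Finset.Icc (1 : ℤ) N) := by
    rw [Finset.disjoint_left]
    intro n hn hn'
    simp only [Finset.mem_Icc] at hn hn'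
    omega
  have h2 : Finset.Icc (-(N : ℤ)) (-1) = (Finset.Icc (1 : ℤ) N).image (fun n => -n) := by
    ext n
    simp only [Finset.mem_Icc, Finset.mem_image]
    constructor
    · intro h; exact ⟨-n, by omega, by omega⟩
    · rintro ⟨b, hb, rfl⟩; omega
  have h3 : ∑ n ∈ Finset.Icc (-(N : ℤ)) (-1), g n = ∑ n ∈ Finset.Icc (1 : ℤ) N, g n := by
    rw [h2, Finset.sum_image (by intro a _ b _ h; exact neg_injective h)]
    exact Finset.sum_congr rfl fun n _ => hg n
  have h4 : ∑ n ∈ Finset.Icc (1 : ℤ) N, g n = ∑ n ∈ Finset.Icc 1 N, g (n : ℤ) := by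
    have h5 : Finset.Icc (1 : ℤ) (N : ℤ) = (Finset.Icc 1 N).image (fun n : ℕ => (n : ℤ)) := by
      ext k
      simp only [Finset.mem_Icc, Finset.mem_image]
      constructor
      · intro hk; exact ⟨k.toNat, by omega, by omega⟩
      · rintro ⟨b, hb, rfl⟩; omega
    rw [h5, Finset.sum_image (by intro a _ b _ h; exact Nat.cast_injective h)]
  rw [h1, Finset.sum_union hd, h3, h4]
  ring

end aux

/-- Let `χ` mod `q` be a Dirichlet character with `χ(-1) = -1` and `χ(n) = 1` for all
positive `n ≤ x`, and `ψ` mod `m` an odd primitive Dirichlet character with `m` prime.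
Then there is `θ ∈ [0,1]` with
`|∑_{1 ≤ |n| ≤ x} (χ(n)ψ(n)/n) e(nθ)| ≥ (√m/φ(m)) ∑_{n ≤ x} 1/n`. -/
theorem stmt17 (q m : ℕ) [NeZero q] (hm : m.Prime) (x : ℝ)
    (χ : DirichletCharacter ℂ q) (hχodd : χ (-1) = -1)
    (hχsmall : ∀ n : ℕ, 0 < n → (n : ℝ) ≤ x → χ (n : ZMod q) = 1)
    (ψ : DirichletCharacter ℂ m) (hψprim : ψ.IsPrimitive) (hψodd : ψ (-1) = -1) :
    ∃ θ ∈ Set.Icc (0 : ℝ) 1,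
      (Real.sqrt m / Nat.totient m) * ∑ n ∈ Finset.Icc 1 ⌊x⌋₊, (1 : ℝ) / n ≤
        ‖∑ n ∈ (Finset.Icc (-(⌊x⌋₊ : ℤ)) ⌊x⌋₊).filter (fun n => n ≠ 0),
            χ (n : ZMod q) * ψ (n : ZMod m) / (n : ℂ) * e (n * θ)‖ := by
  haveI : NeZero m := ⟨hm.pos.ne'⟩
  haveI : Fact m.Prime := ⟨hm⟩
  set N := ⌊x⌋₊ with hN
  set F := (Finset.Icc (-(N : ℤ)) N).filter (fun n => n ≠ 0) with hF
  set τ := gaussSum ψ ZMod.stdAddChar with hτ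
  -- ψ is nontrivial
  have hψne : ψ ≠ 1 := by
    intro h
    have h2 := hψodd
    rw [h, MulChar.one_apply (isUnit_one.neg)] at h2
    norm_num at h2
  -- the functions
  set Sfun : ZMod m → ℂ := fun a => ∑ n ∈ F,
      χ (n : ZMod q) * ψ (n : ZMod m) / (n : ℂ) * e ((n : ℝ) * ((a.val : ℝ) / m)) with hSfun
  set f : ZMod m → ℝ := fun a => ‖Sfun a‖ with hf
  obtain ⟨a₀, -, ha₀⟩ := Finset.exists_mem_eq_sup' (Finset.univ_nonempty (α := ZMod m)) f
  set M := Finset.univ.sup' Finset.univ_nonempty f with hM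
  have hM0 : 0 ≤ M := ha₀ ▸ norm_nonneg _
  set g : ℤ → ℂ := fun n =>
      χ (n : ZMod q) * (ψ (n : ZMod m) * ψ⁻¹ (n : ZMod m)) / (n : ℂ) with hg
  -- the key computation
  have hT : ∑ a : ZMod m, ψ a * Sfun a = τ * ∑ n ∈ F, g n := by
    simp only [hSfun, Finset.mul_sum]
    rw [Finset.sum_comm]
    refine Finset.sum_congr rfl fun n _ => ?_
    have : ∑ a : ZMod m, ψ a * (χ (n : ZMod q) * ψ (n : ZMod m) / (n : ℂ)
          * e ((n : ℝ) * ((a.val : ℝ) / m)))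
        = (χ (n : ZMod q) * ψ (n : ZMod m) / (n : ℂ))
          * ∑ a : ZMod m, ψ a * e ((n : ℝ) * ((a.val : ℝ) / m)) := by
      rw [Finset.mul_sum]
      exact Finset.sum_congr rfl fun a _ => by ring
    rw [this, innerSum17 ψ hψprim n]
    show _ = τ * (χ (n : ZMod q) * (ψ (n : ZMod m) * ψ⁻¹ (n : ZMod m)) / (n : ℂ))
    ring
  -- values of g
  have hval : ∀ n : ℤ, ψ (n : ZMod m) * ψ⁻¹ (n : ZMod m) = if (m : ℤ) ∣ n then 0 else 1 := by
    intro n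
    by_cases h : (m : ℤ) ∣ n
    · rw [if_pos h, (ZMod.intCast_zmod_eq_zero_iff_dvd n m).mpr h,
        MulChar.map_nonunit _ not_isUnit_zero, zero_mul]
    · rw [if_neg h]
      have h0 : (n : ZMod m) ≠ 0 := fun hh => h ((ZMod.intCast_zmod_eq_zero_iff_dvd n m).mp hh)
      have hu : IsUnit ((n : ℤ) : ZMod m) := isUnit_iff_ne_zero.mpr h0
      have hne : ψ ((n : ℤ) : ZMod m) ≠ 0 := by
        intro hz
        have h1 : ‖ψ (hu.unit : (ZMod m)ˣ)‖ = 1 := ψ.unit_norm_eq_one hu.unit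
        rw [IsUnit.unit_spec, hz, norm_zero] at h1
        norm_num at h1
      rw [MulChar.inv_apply_eq_inv', mul_inv_cancel₀ hne]
  have hg' : ∀ n : ℤ, g n = χ (n : ZMod q) * (if (m : ℤ) ∣ n then 0 else 1) / (n : ℂ) := by
    intro n
    show χ (n : ZMod q) * (ψ (n : ZMod m) * ψ⁻¹ (n : ZMod m)) / (n : ℂ) = _
    rw [hval]
  -- g is even
  have hgeven : ∀ n : ℤ, g (-n) = g n := by
    intro n
    rw [hg', hg']
    simp only [dvd_neg, Int.cast_neg]
    have hχneg : χ (-((n : ℤ) : ZMod q)) = - χ ((n : ℤ) : ZMod q) := by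
      rw [neg_eq_neg_one_mul, map_mul, hχodd]; ring
    rw [hχneg, neg_mul, neg_div_neg_eq]
  -- sum over F equals twice positive part
  have hsum2 : ∑ n ∈ F, g n = 2 * ∑ n ∈ Finset.Icc 1 N, g (n : ℤ) := sum_even hgeven N
  -- real values on positive part
  set Sr := ∑ n ∈ Finset.Icc 1 N, (if m ∣ n then 0 else 1 / (n : ℝ)) with hSr
  have hterm : ∀ n ∈ Finset.Icc 1 N, g (n : ℤ) = ((if m ∣ n then 0 else 1 / (n : ℝ) : ℝ) : ℂ) := by
    intro n hn
    simp only [Finset.mem_Icc] at hn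
    have hx : ((n : ℕ) : ℝ) ≤ x := (Nat.le_floor_iff' (by omega)).mp hn.2
    have hχ1 : χ (((n : ℕ) : ℤ) : ZMod q) = 1 := by
      have : (((n : ℕ) : ℤ) : ZMod q) = ((n : ℕ) : ZMod q) := by push_cast; rfl
      rw [this]; exact hχsmall n (by omega) hx
    rw [hg', hχ1, one_mul]
    have hiff : ((m : ℤ) ∣ ((n : ℕ) : ℤ)) ↔ m ∣ n := Int.natCast_dvd_natCast
    by_cases h : m ∣ n
    · rw [if_pos (hiff.mpr h), if_pos h]; simp
    · rw [if_neg (fun hh => h (hiff.mp hh)), if_neg h]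
      push_cast
      ring
  have hcast : ∑ n ∈ Finset.Icc 1 N, g (n : ℤ) = (Sr : ℂ) := by
    rw [Finset.sum_congr rfl hterm, hSr]
    norm_cast
  -- the harmonic sums
  set H := ∑ n ∈ Finset.Icc 1 N, (1 : ℝ) / n with hH
  set Sd := ∑ n ∈ Finset.Icc 1 N, (if m ∣ n then 1 / (n : ℝ) else 0) with hSd
  have hsplit : Sd + Sr = H := by
    rw [hSd, hSr, hH, ← Finset.sum_add_distrib]
    refine Finset.sum_congr rfl fun n _ => ?_
    by_cases h : m ∣ n <;> simp [h]
  have hSr0 : 0 ≤ Sr := by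
    refine Finset.sum_nonneg fun n _ => ?_
    by_cases h : m ∣ n <;> simp [h] <;> positivity
  have hdr : Sd ≤ Sr := by
    set D := (Finset.Icc 1 N).filter (fun n => m ∣ n) with hD
    set R := (Finset.Icc 1 N).filter (fun n => ¬ m ∣ n) with hR
    have hD2 : ∀ n ∈ D, 2 ≤ n := by
      intro n hn
      simp only [hD, Finset.mem_filter, Finset.mem_Icc] at hn
      have := Nat.le_of_dvd (by omega) hn.2
      have := hm.two_le
      omega
    have e1 : Sd = ∑ n ∈ D, 1 / (n : ℝ) := by
      rw [hSd, hD, Finset.sum_filter]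
    have e2 : Sr = ∑ n ∈ R, 1 / (n : ℝ) := by
      rw [hSr, hR, Finset.sum_filter]
      exact Finset.sum_congr rfl fun n _ => by by_cases h : m ∣ n <;> simp [h]
    rw [e1, e2]
    have hinj : ∀ a ∈ D, ∀ b ∈ D, a - 1 = b - 1 → a = b := by
      intro a ha b hb hab
      have := hD2 a ha; have := hD2 b hb
      omega
    calc ∑ n ∈ D, 1 / (n : ℝ)
        ≤ ∑ n ∈ D, (fun k : ℕ => 1 / (k : ℝ)) (n - 1) := by
          refine Finset.sum_le_sum fun n hn => ?_
          have h2 := hD2 n hn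
          show 1 / (n : ℝ) ≤ 1 / (Nat.cast (n - 1) : ℝ)
          have hc : (Nat.cast (n - 1) : ℝ) = (n : ℝ) - 1 := by
            rw [Nat.cast_sub (by omega)]; norm_num
          rw [hc]
          apply one_div_le_one_div_of_le
          · have : (2 : ℝ) ≤ (n : ℝ) := by exact_mod_cast h2
            linarith
          · linarith [Nat.cast_nonneg (α := ℝ) n]
      _ = ∑ k ∈ D.image (fun n => n - 1), (fun k : ℕ => 1 / (k : ℝ)) k :=
          (Finset.sum_image (f := fun k : ℕ => 1 / (k : ℝ)) (g := fun n : ℕ => n - 1)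
            hinj).symm
      _ ≤ ∑ k ∈ R, (fun k : ℕ => 1 / (k : ℝ)) k := by
          refine Finset.sum_le_sum_of_subset_of_nonneg ?_ fun k _ _ => by positivity
          intro k hk
          simp only [Finset.mem_image] at hk
          obtain ⟨n, hn, rfl⟩ := hk
          have h2 := hD2 n hn
          simp only [hD, Finset.mem_filter, Finset.mem_Icc] at hn
          simp only [hR, Finset.mem_filter, Finset.mem_Icc]
          refine ⟨⟨by omega, by omega⟩, fun hdvd => ?_⟩
          have h1 : m ∣ n - (n - 1) := Nat.dvd_sub hn.2 hdvd
          have h3 : n - (n - 1) = 1 := by omega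
          rw [h3] at h1
          have := Nat.le_of_dvd one_pos h1
          have := hm.two_le
          omega
      _ = ∑ k ∈ R, 1 / (k : ℝ) := rfl
  -- norm of T from below
  have hτnorm : ‖τ‖ = Real.sqrt m := norm_gaussSum hm ψ hψne
  have hTnorm : ‖∑ a : ZMod m, ψ a * Sfun a‖ = Real.sqrt m * (2 * Sr) := by
    rw [hT, hsum2, hcast, norm_mul, hτnorm]
    rw [norm_mul, Complex.norm_ofNat, Complex.norm_real, Real.norm_of_nonneg hSr0]
  -- norm of T from above
  have hnormsum : ∑ a : ZMod m, ‖ψ a‖ ≤ (m.totient : ℝ) := by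
    have e3 : ∑ a : ZMod m, ‖ψ a‖ = ∑ a : ZMod m, (if IsUnit a then (1 : ℝ) else 0) := by
      refine Finset.sum_congr rfl fun a _ => ?_
      by_cases h : IsUnit a
      · rw [if_pos h, ← h.unit_spec]
        exact ψ.unit_norm_eq_one h.unit
      · rw [if_neg h, MulChar.map_nonunit _ h, norm_zero]
    rw [e3, Finset.sum_boole]
    have e4 : (Finset.univ.filter (fun a : ZMod m => IsUnit a))
        = Finset.univ.erase (0 : ZMod m) := by
      rw [← Finset.filter_ne']
      exact Finset.filter_congr fun a _ => by simp [isUnit_iff_ne_zero]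
    rw [e4, Finset.card_erase_of_mem (Finset.mem_univ _), Finset.card_univ, ZMod.card,
      Nat.totient_prime hm]
  have hub : ‖∑ a : ZMod m, ψ a * Sfun a‖ ≤ (m.totient : ℝ) * M := by
    calc ‖∑ a : ZMod m, ψ a * Sfun a‖ ≤ ∑ a : ZMod m, ‖ψ a * Sfun a‖ :=
          norm_sum_le _ _
      _ = ∑ a : ZMod m, ‖ψ a‖ * f a := by simp [hf, norm_mul]
      _ ≤ ∑ a : ZMod m, ‖ψ a‖ * M := by
          refine Finset.sum_le_sum fun a _ => ?_
          exact mul_le_mul_of_nonneg_left (Finset.le_sup' f (Finset.mem_univ a)) (norm_nonneg _)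
      _ = (∑ a : ZMod m, ‖ψ a‖) * M := by rw [Finset.sum_mul]
      _ ≤ (m.totient : ℝ) * M := mul_le_mul_of_nonneg_right hnormsum hM0
  -- conclude
  have hφpos : (0 : ℝ) < m.totient := by
    have := Nat.totient_pos.mpr hm.pos
    exact_mod_cast this
  have hkey : Real.sqrt m * H ≤ (m.totient : ℝ) * f a₀ := by
    have h6 : H ≤ 2 * Sr := by linarith
    have h7 : Real.sqrt m * H ≤ Real.sqrt m * (2 * Sr) :=
      mul_le_mul_of_nonneg_left h6 (Real.sqrt_nonneg m)
    rw [← ha₀]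
    calc Real.sqrt m * H ≤ Real.sqrt m * (2 * Sr) := h7
      _ = ‖∑ a : ZMod m, ψ a * Sfun a‖ := hTnorm.symm
      _ ≤ (m.totient : ℝ) * M := hub
  refine ⟨(a₀.val : ℝ) / m, ⟨div_nonneg (by positivity) (by positivity), ?_⟩, ?_⟩
  · rw [div_le_one (by exact_mod_cast hm.pos)]
    exact_mod_cast (ZMod.val_lt a₀).le
  · show Real.sqrt m / (m.totient : ℝ) * H ≤ f a₀
    rw [div_mul_eq_mul_div, div_le_iff₀ hφpos]
    linarith
end

section
/- Let {a(n)}_{n∈ℤ} be complex numbers with |a(n)| ≤ 1 for all n, and x ≥ 2. Then max_{θ∈[0,1]} max_{1 ≤ N ≤ x} |∑_{1≤|n|≤N} (a(n)/n) e(nθ)| = max_{θ∈[0,1]} |∑_{1≤|n|≤x} (a(n)/n) e(nθ)| + O(1), with an absolute implied constant. -/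
open Complex

/-- The sum `∑_{1 ≤ |n| ≤ N} (a(n)/n) e(nθ)` over nonzero integers `|n| ≤ N`. -/
noncomputable def expSum (a : ℤ → ℂ) (N : ℕ) (θ : ℝ) : ℂ :=
  ∑ n ∈ (Finset.Icc (-(N : ℤ)) N).filter (fun n => n ≠ 0), a n / (n : ℂ) * e (n * θ)

open intervalIntegral

lemma hder (s : ℝ) : HasDerivAt (fun t : ℝ => Complex.exp ((t:ℂ) * I)) (I * Complex.exp ((s:ℂ) * I)) s := by
  have h := ((Complex.hasDerivAt_exp ((s:ℂ)*I)).comp (s:ℂ) ((hasDerivAt_id ((s:ℂ))).mul_const I)).comp_ofReal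
  simpa [mul_comm] using h

lemma L1 (t : ℝ) : ‖Complex.exp ((t:ℂ) * I) - 1‖ ≤ |t| := by
  have h : Complex.exp ((t:ℂ)*I) - 1 = ∫ s in (0:ℝ)..t, I * Complex.exp ((s:ℂ) * I) := by
    rw [integral_eq_sub_of_hasDerivAt (fun s _ => hder s)]
    · simp
    · apply Continuous.intervalIntegrable; fun_prop
  rw [h]
  have := intervalIntegral.norm_integral_le_of_norm_le_const (C := 1) (a := (0:ℝ)) (b := t)
    (f := fun s => I * Complex.exp ((s:ℂ) * I))
    (fun s _ => by simp [Complex.norm_exp_ofReal_mul_I])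
  simpa using this

lemma L2 (u : ℝ) : ‖Complex.exp ((u:ℂ) * I) - 1 - (u:ℂ) * I‖ ≤ u ^ 2 := by
  have key : Complex.exp ((u:ℂ)*I) - 1 - (u:ℂ)*I = ∫ t in (0:ℝ)..u, (I * Complex.exp ((t:ℂ) * I) - I) := by
    have h : ∀ t : ℝ, HasDerivAt (fun s : ℝ => Complex.exp ((s:ℂ) * I) - (s:ℂ) * I)
        (I * Complex.exp ((t:ℂ) * I) - I) t := by
      intro t
      exact (hder t).sub (by simpa [mul_comm] using ((hasDerivAt_id t).ofReal_comp.mul_const I))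
    rw [integral_eq_sub_of_hasDerivAt (fun t _ => h t)]
    · simp; ring
    · apply Continuous.intervalIntegrable; fun_prop
  rw [key]
  have hb := intervalIntegral.norm_integral_le_of_norm_le_const (C := |u|) (a := (0:ℝ)) (b := u)
    (f := fun t => I * Complex.exp ((t:ℂ) * I) - I) (fun t ht => by
      have h1 : ‖I * Complex.exp ((t:ℂ) * I) - I‖ = ‖Complex.exp ((t:ℂ)*I) - 1‖ := by
        rw [show I * Complex.exp ((t:ℂ) * I) - I = I * (Complex.exp ((t:ℂ)*I) - 1) by ring]
        simp
      rw [h1]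
      refine (L1 t).trans ?_
      rcases Set.mem_uIoc.mp ht with h | h
      · rw [_root_.abs_of_pos h.1]; exact h.2.trans (le_abs_self u)
      · rw [_root_.abs_of_nonpos h.2]
        have := neg_abs_le u; linarith [h.1])
  calc ‖∫ t in (0:ℝ)..u, (I * Complex.exp ((t:ℂ) * I) - I)‖ ≤ |u| * |u - 0| := hb
    _ = u ^ 2 := by rw [sub_zero, ← abs_mul, ← sq, _root_.abs_of_nonneg (sq_nonneg u)]

noncomputable def W (N : ℕ) (n : ℤ) : ℂ :=
  (N:ℂ) * (Complex.exp (((2*Real.pi*n/(N:ℝ) : ℝ) : ℂ) * I) - 1) / (2*(Real.pi:ℂ)*I*(n:ℂ))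

lemma c_ne (n : ℤ) (hn : n ≠ 0) : (2*(Real.pi:ℂ)*I*(n:ℂ)) ≠ 0 := by
  refine mul_ne_zero (mul_ne_zero (mul_ne_zero two_ne_zero ?_) I_ne_zero) ?_
  · exact_mod_cast Real.pi_ne_zero
  · exact_mod_cast hn

lemma norm_c (n : ℤ) : ‖(2*(Real.pi:ℂ)*I*(n:ℂ))‖ = 2*Real.pi*|(n:ℝ)| := by
  have : ((n:ℂ)) = (((n:ℝ)):ℂ) := by push_cast; ring
  rw [this, norm_mul, norm_mul, norm_mul, Complex.norm_real, Complex.norm_real, Complex.norm_I]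
  rw [Real.norm_eq_abs, Real.norm_eq_abs, abs_eq_self.mpr Real.pi_pos.le]
  norm_num

lemma term_integral (n : ℤ) (hn : n ≠ 0) (θ : ℝ) (N : ℕ) (hN : 1 ≤ N) :
    (N:ℂ) * ∫ t in (0:ℝ)..(N:ℝ)⁻¹, e ((n:ℝ)*(θ+t)) = e (n*θ) * W N n := by
  have hNR : (N:ℝ) ≠ 0 := Nat.cast_ne_zero.mpr (by omega)
  have hsplit : ∀ t : ℝ, e ((n:ℝ)*(θ+t)) = e (n*θ) * Complex.exp ((2*(Real.pi:ℂ)*I*(n:ℂ)) * t) := by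
    intro t; unfold e; rw [← Complex.exp_add]; congr 1; push_cast; ring
  simp_rw [hsplit]
  rw [intervalIntegral.integral_const_mul, integral_exp_mul_complex (c_ne n hn)]
  rw [Complex.ofReal_zero, mul_zero, Complex.exp_zero]
  unfold W
  rw [show (2*(Real.pi:ℂ)*I*(n:ℂ)) * ((N:ℝ)⁻¹ : ℝ) = ((2*Real.pi*n/(N:ℝ) : ℝ) : ℂ) * I by
    push_cast; field_simp]
  ring

lemma W_bound1 (N : ℕ) (hN : 1 ≤ N) (n : ℤ) (hn : n ≠ 0) : ‖W N n‖ ≤ (N:ℝ)/(Real.pi * |(n:ℝ)|) := by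
  have hnn : (0:ℝ) < |(n:ℝ)| := by simp [abs_pos]; exact_mod_cast hn
  have hNpos : (0:ℝ) < N := by positivity
  have h1 : ‖Complex.exp (((2*Real.pi*n/(N:ℝ) : ℝ) : ℂ) * I) - 1‖ ≤ 2 :=
    le_trans (norm_sub_le _ _) (by rw [Complex.norm_exp_ofReal_mul_I, norm_one]; norm_num)
  unfold W
  rw [norm_div, norm_mul, norm_c, Complex.norm_natCast]
  calc (N:ℝ) * ‖Complex.exp (((2*Real.pi*n/(N:ℝ) : ℝ) : ℂ) * I) - 1‖ / (2*Real.pi*|(n:ℝ)|)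
      ≤ (N:ℝ) * 2 / (2*Real.pi*|(n:ℝ)|) := by gcongr
    _ = (N:ℝ)/(Real.pi * |(n:ℝ)|) := by field_simp

lemma W_bound2 (N : ℕ) (hN : 1 ≤ N) (n : ℤ) (hn : n ≠ 0) :
    ‖1 - W N n‖ ≤ 2*Real.pi*|(n:ℝ)|/(N:ℝ) := by
  have hnn : (0:ℝ) < |(n:ℝ)| := by simp [abs_pos]; exact_mod_cast hn
  have hNpos : (0:ℝ) < N := by positivity
  have hNR : ((N:ℝ)) ≠ 0 := ne_of_gt hNpos
  have hNC : ((N:ℕ):ℂ) ≠ 0 := Nat.cast_ne_zero.mpr (by omega)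
  have hnC : ((n:ℤ):ℂ) ≠ 0 := by exact_mod_cast hn
  have hpiC : ((Real.pi:ℝ):ℂ) ≠ 0 := by exact_mod_cast Real.pi_ne_zero
  have hkey : 1 - W N n = -((N:ℂ) * (Complex.exp (((2*Real.pi*n/(N:ℝ) : ℝ) : ℂ) * I) - 1
      - ((2*Real.pi*n/(N:ℝ) : ℝ) : ℂ) * I)) / (2*(Real.pi:ℂ)*I*(n:ℂ)) := by
    unfold W
    have h1 : (((2*Real.pi*n/(N:ℝ) : ℝ)):ℂ) = 2*(Real.pi:ℂ)*(n:ℂ)/((N:ℕ):ℂ) := by push_cast; ring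
    rw [h1]
    field_simp
    ring
  have h2 := L2 (2*Real.pi*n/(N:ℝ))
  have hu2 : (2*Real.pi*(n:ℝ)/(N:ℝ))^2 = (2*Real.pi*|(n:ℝ)|)^2/(N:ℝ)^2 := by
    rw [div_pow]; congr 1
    rw [mul_pow, mul_pow, mul_pow, mul_pow, _root_.sq_abs]
  rw [hkey, norm_div, norm_neg, norm_mul, norm_c, Complex.norm_natCast]
  calc (N:ℝ) * ‖_‖ / (2*Real.pi*|(n:ℝ)|)
      ≤ (N:ℝ) * ((2*Real.pi*|(n:ℝ)|)^2/(N:ℝ)^2) / (2*Real.pi*|(n:ℝ)|) := by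
        have h2' : ‖Complex.exp (((2*Real.pi*n/(N:ℝ) : ℝ) : ℂ) * I) - 1
            - ((2*Real.pi*n/(N:ℝ) : ℝ) : ℂ) * I‖ ≤ (2*Real.pi*|(n:ℝ)|)^2/(N:ℝ)^2 := by
          rw [← hu2]; exact_mod_cast h2
        gcongr
    _ = 2*Real.pi*|(n:ℝ)|/(N:ℝ) := by field_simp

lemma norm_e (x : ℝ) : ‖e x‖ = 1 := by
  unfold e
  rw [show (2*(Real.pi:ℂ)*I*(x:ℝ) : ℂ) = ((2*Real.pi*x : ℝ):ℂ)*I by push_cast; ring,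
    Complex.norm_exp_ofReal_mul_I]

lemma norm_g_le (a : ℤ → ℂ) (ha : ∀ n : ℤ, ‖a n‖ ≤ 1) (n : ℤ) (hn : n ≠ 0) (θ : ℝ) :
    ‖a n / (n:ℂ) * e ((n:ℝ)*θ)‖ ≤ |(n:ℝ)|⁻¹ := by
  have hnn : (0:ℝ) < |(n:ℝ)| := by simp [abs_pos]; exact_mod_cast hn
  rw [norm_mul, norm_div, norm_e, mul_one]
  rw [show ((n:ℤ):ℂ) = (((n:ℝ)):ℂ) by push_cast; ring, Complex.norm_real, Real.norm_eq_abs]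
  rw [div_le_iff₀ hnn, inv_mul_cancel₀ (ne_of_gt hnn)]
  exact ha n

lemma repI (a : ℤ → ℂ) (M N : ℕ) (hN : 1 ≤ N) (θ : ℝ) :
    (N:ℂ) * ∫ t in (0:ℝ)..(N:ℝ)⁻¹, expSum a M (θ+t)
      = ∑ n ∈ (Finset.Icc (-(M : ℤ)) M).filter (fun n => n ≠ 0),
          a n / (n:ℂ) * e ((n:ℝ)*θ) * W N n := by
  unfold expSum
  rw [intervalIntegral.integral_finset_sum (fun n _ => by
    apply Continuous.intervalIntegrable
    unfold e; fun_prop)]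
  rw [Finset.mul_sum]
  apply Finset.sum_congr rfl
  intro n hn
  have hn0 : n ≠ 0 := (Finset.mem_filter.mp hn).2
  rw [intervalIntegral.integral_const_mul]
  rw [show (N:ℂ) * (a n/(n:ℂ) * ∫ t in (0:ℝ)..(N:ℝ)⁻¹, e ((n:ℝ)*(θ+t)))
      = a n/(n:ℂ) * ((N:ℂ) * ∫ t in (0:ℝ)..(N:ℝ)⁻¹, e ((n:ℝ)*(θ+t))) by ring,
    term_integral n hn0 θ N hN]
  ring

lemma expSum_indicator (a : ℤ → ℂ) (M N : ℕ) (hNM : N ≤ M) (θ : ℝ) :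
    expSum a N θ = ∑ n ∈ (Finset.Icc (-(M : ℤ)) M).filter (fun n => n ≠ 0),
      (if |n| ≤ (N:ℤ) then a n / (n:ℂ) * e ((n:ℝ)*θ) else 0) := by
  unfold expSum
  rw [← Finset.sum_filter]
  apply Finset.sum_congr _ (fun _ _ => rfl)
  ext n
  simp only [Finset.mem_filter, Finset.mem_Icc, abs_le]
  omega

lemma tail_sum (M N : ℕ) (hN : 1 ≤ N) (hNM : N ≤ M) :
    ∑ n ∈ ((Finset.Icc (-(M : ℤ)) M).filter (fun n => n ≠ 0)).filter
        (fun n => ¬ |n| ≤ (N:ℤ)), ((n:ℝ)^2)⁻¹ ≤ 2/(N:ℝ) := by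
  set U1 := (Finset.Ioc N M).image (fun k : ℕ => (k:ℤ)) with hU1
  set U2 := (Finset.Ioc N M).image (fun k : ℕ => -(k:ℤ)) with hU2
  have hsub : ((Finset.Icc (-(M : ℤ)) M).filter (fun n => n ≠ 0)).filter
      (fun n => ¬ |n| ≤ (N:ℤ)) ⊆ U1 ∪ U2 := by
    intro n hn
    simp only [Finset.mem_filter, Finset.mem_Icc, not_le, Int.abs_eq_natAbs] at hn
    simp only [hU1, hU2, Finset.mem_union, Finset.mem_image, Finset.mem_Ioc]
    rcases Int.natAbs_eq n with h | h
    · left; exact ⟨n.natAbs, ⟨by omega, by omega⟩, h.symm⟩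
    · right; exact ⟨n.natAbs, ⟨by omega, by omega⟩, h.symm⟩
  have hdisj : Disjoint U1 U2 := by
    rw [Finset.disjoint_left]
    intro z hz1 hz2
    simp only [hU1, hU2, Finset.mem_image, Finset.mem_Ioc] at hz1 hz2
    obtain ⟨k, hk, rfl⟩ := hz1
    obtain ⟨j, hj, hjk⟩ := hz2
    omega
  have hIoc : ∑ k ∈ Finset.Ioc N M, (((k:ℕ):ℝ)^2)⁻¹ ≤ (N:ℝ)⁻¹ := by
    have := sum_Ioc_inv_sq_le_sub (α := ℝ) (k := N) (n := M) (by omega) hNM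
    have hM : (0:ℝ) ≤ ((M:ℕ):ℝ)⁻¹ := by positivity
    linarith
  calc _ ≤ ∑ n ∈ U1 ∪ U2, ((n:ℝ)^2)⁻¹ :=
        Finset.sum_le_sum_of_subset_of_nonneg hsub (fun n _ _ => by positivity)
    _ = (∑ n ∈ U1, ((n:ℝ)^2)⁻¹) + ∑ n ∈ U2, ((n:ℝ)^2)⁻¹ := Finset.sum_union hdisj
    _ ≤ (N:ℝ)⁻¹ + (N:ℝ)⁻¹ := by
        apply add_le_add
        · rw [hU1, Finset.sum_image (by intro a _ b _ h; simp only at h; exact_mod_cast h)]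
          refine le_trans (le_of_eq (Finset.sum_congr rfl fun k _ => ?_)) hIoc
          push_cast; ring
        · rw [hU2, Finset.sum_image (by intro a _ b _ h; simp only at h; omega)]
          refine le_trans (le_of_eq (Finset.sum_congr rfl fun k _ => ?_)) hIoc
          push_cast; ring
    _ ≤ 2/(N:ℝ) := le_of_eq (by rw [div_eq_mul_inv, two_mul])

theorem key (a : ℤ → ℂ) (ha : ∀ n : ℤ, ‖a n‖ ≤ 1) (M N : ℕ) (hN : 1 ≤ N) (hNM : N ≤ M)
    (θ : ℝ) (Mx : ℝ) (hMx : ∀ t : ℝ, ‖expSum a M t‖ ≤ Mx) :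
    ‖expSum a N θ‖ ≤ Mx + 20 := by
  have hNpos : (0:ℝ) < N := by positivity
  set F := (Finset.Icc (-(M : ℤ)) M).filter (fun n => n ≠ 0) with hF
  set Iv := (N:ℂ) * ∫ t in (0:ℝ)..(N:ℝ)⁻¹, expSum a M (θ+t) with hIvdef
  have hIv : ‖Iv‖ ≤ Mx := by
    have hint := intervalIntegral.norm_integral_le_of_norm_le_const (C := Mx) (a := (0:ℝ))
      (b := (N:ℝ)⁻¹) (f := fun t => expSum a M (θ+t)) (fun t _ => hMx (θ+t))
    rw [hIvdef, norm_mul, Complex.norm_natCast]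
    rw [sub_zero, _root_.abs_of_nonneg (by positivity : (0:ℝ) ≤ (N:ℝ)⁻¹)] at hint
    calc (N:ℝ) * ‖∫ t in (0:ℝ)..(N:ℝ)⁻¹, expSum a M (θ+t)‖
        ≤ (N:ℝ) * (Mx * (N:ℝ)⁻¹) := by
          apply mul_le_mul_of_nonneg_left hint hNpos.le
      _ = Mx := by field_simp
  have hdiff : ‖expSum a N θ - Iv‖ ≤ 20 := by
    have hMx0 : (0:ℝ) ≤ Mx := le_trans (norm_nonneg _) (hMx 0)
    rw [expSum_indicator a M N hNM θ, hIvdef, repI a M N hN θ, ← Finset.sum_sub_distrib]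
    refine le_trans (norm_sum_le _ _) ?_
    have hterm : ∀ n ∈ F, ‖(if |n| ≤ (N:ℤ) then a n / (n:ℂ) * e ((n:ℝ)*θ) else 0)
        - a n / (n:ℂ) * e ((n:ℝ)*θ) * W N n‖
        ≤ (if |n| ≤ (N:ℤ) then 2*Real.pi/(N:ℝ) else (N:ℝ)/Real.pi * ((n:ℝ)^2)⁻¹) := by
      intro n hn
      have hn0 : n ≠ 0 := (Finset.mem_filter.mp hn).2
      have hnn : (0:ℝ) < |(n:ℝ)| := by simp [abs_pos]; exact_mod_cast hn0
      by_cases hcase : |n| ≤ (N:ℤ)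
      · rw [if_pos hcase, if_pos hcase]
        rw [show a n / (n:ℂ) * e ((n:ℝ)*θ) - a n / (n:ℂ) * e ((n:ℝ)*θ) * W N n
            = a n / (n:ℂ) * e ((n:ℝ)*θ) * (1 - W N n) by ring, norm_mul]
        calc ‖a n / (n:ℂ) * e ((n:ℝ)*θ)‖ * ‖1 - W N n‖
            ≤ |(n:ℝ)|⁻¹ * (2*Real.pi*|(n:ℝ)|/(N:ℝ)) := by
              apply mul_le_mul (norm_g_le a ha n hn0 θ) (W_bound2 N hN n hn0)
                (norm_nonneg _) (by positivity)
          _ = 2*Real.pi/(N:ℝ) := by field_simp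
      · rw [if_neg hcase, if_neg hcase, zero_sub, norm_neg, norm_mul]
        calc ‖a n / (n:ℂ) * e ((n:ℝ)*θ)‖ * ‖W N n‖
            ≤ |(n:ℝ)|⁻¹ * ((N:ℝ)/(Real.pi * |(n:ℝ)|)) := by
              apply mul_le_mul (norm_g_le a ha n hn0 θ) (W_bound1 N hN n hn0)
                (norm_nonneg _) (by positivity)
          _ = (N:ℝ)/Real.pi * ((n:ℝ)^2)⁻¹ := by
              rw [← _root_.sq_abs ((n:ℝ)), sq, mul_inv, div_eq_mul_inv, div_eq_mul_inv, mul_inv]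
              ring
    refine le_trans (Finset.sum_le_sum hterm) ?_
    rw [Finset.sum_ite]
    have hcard : (F.filter (fun n => |n| ≤ (N:ℤ))).card ≤ 2*N+1 := by
      have hsub2 : F.filter (fun n => |n| ≤ (N:ℤ)) ⊆ Finset.Icc (-(N:ℤ)) N := by
        intro n hn
        simp only [hF, Finset.mem_filter, Finset.mem_Icc, abs_le] at hn ⊢
        omega
      calc _ ≤ (Finset.Icc (-(N:ℤ)) N).card := Finset.card_le_card hsub2
        _ = 2*N+1 := by rw [Int.card_Icc]; omega
    have hN1 : (1:ℝ) ≤ (N:ℝ) := by exact_mod_cast hN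
    have hNd : 2*Real.pi/(N:ℝ) ≤ 2*Real.pi := by
      rw [div_le_iff₀ hNpos]; nlinarith [Real.pi_pos]
    have h1 : ∑ _n ∈ F.filter (fun n => |n| ≤ (N:ℤ)), 2*Real.pi/(N:ℝ) ≤ 6*Real.pi := by
      rw [Finset.sum_const, nsmul_eq_mul]
      calc ((F.filter (fun n => |n| ≤ (N:ℤ))).card : ℝ) * (2*Real.pi/(N:ℝ))
          ≤ ((2*N+1 : ℕ) : ℝ) * (2*Real.pi/(N:ℝ)) := by
            apply mul_le_mul_of_nonneg_right (by exact_mod_cast hcard) (by positivity)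
        _ = 4*Real.pi + 2*Real.pi/(N:ℝ) := by push_cast; field_simp; ring
        _ ≤ 6*Real.pi := by nlinarith [Real.pi_pos]
    have h2 : ∑ n ∈ F.filter (fun n => ¬ |n| ≤ (N:ℤ)), (N:ℝ)/Real.pi * ((n:ℝ)^2)⁻¹ ≤ 2/Real.pi := by
      rw [← Finset.mul_sum]
      calc (N:ℝ)/Real.pi * ∑ n ∈ F.filter (fun n => ¬ |n| ≤ (N:ℤ)), ((n:ℝ)^2)⁻¹
          ≤ (N:ℝ)/Real.pi * (2/(N:ℝ)) := by
            apply mul_le_mul_of_nonneg_left (tail_sum M N hN hNM) (by positivity)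
        _ = 2/Real.pi := by field_simp
    have hpil : Real.pi ≤ 3.15 := by linarith [Real.pi_lt_d2]
    have hpig : 2 ≤ Real.pi := Real.two_le_pi
    have h2pi : 2/Real.pi ≤ 1 := by rw [div_le_one Real.pi_pos]; linarith
    calc _ ≤ 6*Real.pi + 2/Real.pi := add_le_add h1 h2
      _ ≤ 20 := by nlinarith
  calc ‖expSum a N θ‖ = ‖Iv + (expSum a N θ - Iv)‖ := by congr 1; ring
    _ ≤ ‖Iv‖ + ‖expSum a N θ - Iv‖ := norm_add_le _ _
    _ ≤ Mx + 20 := add_le_add hIv hdiff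

lemma e_sub_int (x : ℝ) (k : ℤ) : e (x - k) = e x := by
  unfold e
  rw [show (2*(Real.pi:ℂ)*I*((x - k : ℝ):ℂ)) = 2*(Real.pi:ℂ)*I*(x:ℝ) + (-k : ℤ) * (2*(Real.pi:ℂ)*I) by
    push_cast; ring]
  rw [Complex.exp_add, Complex.exp_int_mul_two_pi_mul_I, mul_one]

lemma expSum_fract (a : ℤ → ℂ) (M : ℕ) (t : ℝ) : expSum a M (Int.fract t) = expSum a M t := by
  unfold expSum
  apply Finset.sum_congr rfl
  intro n _
  congr 1
  rw [show (n:ℝ) * Int.fract t = (n:ℝ)*t - ((n * ⌊t⌋ : ℤ) : ℝ) by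
    rw [Int.fract]; push_cast; ring]
  exact e_sub_int _ _

lemma norm_expSum_le (a : ℤ → ℂ) (ha : ∀ n : ℤ, ‖a n‖ ≤ 1) (N : ℕ) (θ : ℝ) :
    ‖expSum a N θ‖ ≤ 2*N+1 := by
  unfold expSum
  refine le_trans (norm_sum_le _ _) ?_
  have hb : ∀ n ∈ (Finset.Icc (-(N : ℤ)) N).filter (fun n => n ≠ 0),
      ‖a n / (n:ℂ) * e (n * θ)‖ ≤ 1 := by
    intro n hn
    have hn0 : n ≠ 0 := (Finset.mem_filter.mp hn).2
    have h1 : (1:ℝ) ≤ |(n:ℝ)| := by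
      rw [show (1:ℝ) = ((1:ℤ):ℝ) by norm_num, ← Int.cast_abs]
      exact_mod_cast Int.one_le_abs hn0
    refine le_trans (norm_g_le a ha n hn0 θ) ?_
    rw [inv_le_one_iff₀]; right; exact h1
  refine le_trans (Finset.sum_le_card_nsmul _ _ 1 hb) ?_
  rw [nsmul_eq_mul, mul_one]
  have hcard : ((Finset.Icc (-(N : ℤ)) N).filter (fun n => n ≠ 0)).card ≤ 2*N+1 := by
    calc _ ≤ (Finset.Icc (-(N : ℤ)) N).card := Finset.card_le_card (Finset.filter_subset _ _)
      _ = 2*N+1 := by rw [Int.card_Icc]; omega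
  calc _ ≤ ((2*N+1 : ℕ):ℝ) := by exact_mod_cast hcard
    _ = 2*(N:ℝ)+1 := by push_cast; ring

/-- Lemma 2.2 of Goldmakher–Lamzouri: for `|a(n)| ≤ 1` and `x ≥ 2`,
`max_{θ ∈ [0,1]} max_{1 ≤ N ≤ x} |∑_{1≤|n|≤N} (a(n)/n) e(nθ)|
  = max_{θ ∈ [0,1]} |∑_{1≤|n|≤x} (a(n)/n) e(nθ)| + O(1)`,
with an absolute implied constant. -/
theorem stmt19 :
    ∃ C : ℝ, ∀ (a : ℤ → ℂ), (∀ n : ℤ, ‖a n‖ ≤ 1) → ∀ x : ℝ, 2 ≤ x →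
      |sSup ((fun p : ℝ × ℕ => ‖expSum a p.2 p.1‖) ''
            (Set.Icc (0 : ℝ) 1 ×ˢ {N : ℕ | 1 ≤ N ∧ (N : ℝ) ≤ x})) -
        sSup ((fun θ : ℝ => ‖expSum a ⌊x⌋₊ θ‖) '' Set.Icc (0 : ℝ) 1)| ≤ C := by
  refine ⟨20, fun a ha x hx => ?_⟩
  have hx0 : (0:ℝ) ≤ x := by linarith
  set M := ⌊x⌋₊ with hMdef
  have hM1 : 1 ≤ M := Nat.le_floor (by push_cast; linarith)
  have hMle : (M:ℝ) ≤ x := Nat.floor_le hx0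
  set B := (fun θ : ℝ => ‖expSum a M θ‖) '' Set.Icc (0:ℝ) 1 with hBdef
  set A := (fun p : ℝ × ℕ => ‖expSum a p.2 p.1‖) ''
    (Set.Icc (0 : ℝ) 1 ×ˢ {N : ℕ | 1 ≤ N ∧ (N : ℝ) ≤ x}) with hAdef
  have hBne : B.Nonempty := ⟨_, Set.mem_image_of_mem _ (Set.left_mem_Icc.mpr zero_le_one)⟩
  have hBbdd : BddAbove B := by
    refine ⟨2*M+1, ?_⟩
    rintro y ⟨θ, _, rfl⟩
    exact norm_expSum_le a ha M θ
  have hMxB : ∀ t : ℝ, ‖expSum a M t‖ ≤ sSup B := by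
    intro t
    rw [← expSum_fract]
    exact le_csSup hBbdd ⟨Int.fract t, ⟨Int.fract_nonneg t, (Int.fract_lt_one t).le⟩, rfl⟩
  have hB0 : 0 ≤ sSup B := le_trans (norm_nonneg _) (hMxB 0)
  have hAle : ∀ y ∈ A, y ≤ sSup B + 20 := by
    rintro y ⟨⟨θ, N⟩, ⟨hθ, hN1, hNx⟩, rfl⟩
    exact key a ha M N hN1 (Nat.le_floor hNx) θ _ hMxB
  have hAbdd : BddAbove A := ⟨sSup B + 20, fun y hy => hAle y hy⟩
  have hBA : B ⊆ A := by
    rintro y ⟨θ, hθ, rfl⟩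
    exact ⟨(θ, M), ⟨hθ, hM1, hMle⟩, rfl⟩
  have h1 : sSup B ≤ sSup A := csSup_le_csSup hAbdd hBne hBA
  have h2 : sSup A ≤ sSup B + 20 := Real.sSup_le hAle (by linarith)
  rw [abs_le]
  constructor <;> linarith
end
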